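/- For the Laplace prior p(h|σ) = (1/(2στ))^{2L} exp(−‖h‖₁/(τσ)) with fixed τ > 0, the negative log-prior −log p(h|σ) = 2L log(2στ) + ‖h‖₁/(τσ) is not jointly convex in (h, σ) on ℝ^{2L} × (0, ∞), but after the change of variables g = h/σ, ρ = 1/σ it equals 2L log(2τ) − 2L log ρ + ‖g‖₁/τ, which is jointly convex in (g, ρ). -/

import Mathlib

/-- The negative log Laplace prior `2L log(2στ) + ‖h‖₁/(τσ)` is not jointly convex in
`(h, σ)` on `ℝ^{2L} × (0, ∞)`, but after the change of variables `g = h/σ`, `ρ = 1/σ`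
it equals `2L log(2τ) − 2L log ρ + ‖g‖₁/τ`, which is jointly convex in `(g, ρ)`. -/
theorem neg_log_laplace_prior_reparametrization (L : ℕ) (hL : 0 < L)
    (τ : ℝ) (hτ : 0 < τ) :
    ¬ ConvexOn ℝ {p : (Fin (2 * L) → ℝ) × ℝ | 0 < p.2}
        (fun p => 2 * L * Real.log (2 * p.2 * τ) + (∑ j, |p.1 j|) / (τ * p.2)) ∧
    (∀ (h : Fin (2 * L) → ℝ) (σ : ℝ), 0 < σ →
      2 * L * Real.log (2 * σ * τ) + (∑ j, |h j|) / (τ * σ)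
        = 2 * L * Real.log (2 * τ) - 2 * L * Real.log (1 / σ)
          + (∑ j, |h j / σ|) / τ) ∧
    ConvexOn ℝ {p : (Fin (2 * L) → ℝ) × ℝ | 0 < p.2}
      (fun p => 2 * L * Real.log (2 * τ) - 2 * L * Real.log p.2
        + (∑ j, |p.1 j|) / τ) := by
  refine ⟨?_, ?_, ?_⟩
  · intro hc
    have hx : ((0 : Fin (2 * L) → ℝ), (1:ℝ)) ∈ {p : (Fin (2 * L) → ℝ) × ℝ | 0 < p.2} := by
      simp
    have hy : ((0 : Fin (2 * L) → ℝ), (3:ℝ)) ∈ {p : (Fin (2 * L) → ℝ) × ℝ | 0 < p.2} := by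
      norm_num [Set.mem_setOf_eq]
    have key := hc.2 hx hy (by norm_num : (0:ℝ) ≤ (1:ℝ)/2) (by norm_num : (0:ℝ) ≤ (1:ℝ)/2)
      (by norm_num)
    simp only [Prod.smul_mk, smul_zero, Prod.mk_add_mk, add_zero, smul_eq_mul,
      Pi.add_apply, Pi.zero_apply, abs_zero, Finset.sum_const_zero, zero_div,
      add_zero] at key
    norm_num at key
    -- key : 2*L*log(2*2*τ) ≤ 1/2 *(2*L*log(2*1*τ)) + 1/2*(2*L*log(2*3*τ))
    have hLpos : (0:ℝ) < (L:ℝ) := by exact_mod_cast hL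
    have h1 : Real.log (4 * τ) = Real.log 4 + Real.log τ :=
      Real.log_mul (by norm_num) hτ.ne'
    have h2 : Real.log (2 * τ) = Real.log 2 + Real.log τ :=
      Real.log_mul (by norm_num) hτ.ne'
    have h3 : Real.log (6 * τ) = Real.log 6 + Real.log τ :=
      Real.log_mul (by norm_num) hτ.ne'
    rw [h1, h2, h3] at key
    have h4 : Real.log 4 + Real.log 4 = Real.log 16 := by
      rw [← Real.log_mul (by norm_num) (by norm_num)]; norm_num
    have h5 : Real.log 2 + Real.log 6 = Real.log 12 := by
      rw [← Real.log_mul (by norm_num) (by norm_num)]; norm_num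
    have h6 : Real.log 12 < Real.log 16 := Real.log_lt_log (by norm_num) (by norm_num)
    nlinarith [key, h4, h5, h6]
  · intro h σ hσ
    have hσ' : σ ≠ 0 := hσ.ne'
    have hlog : Real.log (2 * σ * τ) = Real.log (2 * τ) - Real.log (1 / σ) := by
      rw [Real.log_div one_ne_zero hσ', Real.log_one,
        Real.log_mul (by positivity) hτ.ne', Real.log_mul (by norm_num) hσ.ne',
        Real.log_mul (by norm_num) hτ.ne']
      ring
    rw [hlog]
    have hsum : (∑ j, |h j / σ|) = (∑ j, |h j|) / σ := by
      rw [Finset.sum_div]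
      refine Finset.sum_congr rfl fun j _ => ?_
      rw [abs_div, abs_of_pos hσ]
    rw [hsum]
    field_simp
  · have hset : Convex ℝ {p : (Fin (2 * L) → ℝ) × ℝ | 0 < p.2} := by
      have := (convex_Ioi (0:ℝ)).linear_preimage (LinearMap.snd ℝ (Fin (2 * L) → ℝ) ℝ)
      exact this
    have hlogc : ConvexOn ℝ {p : (Fin (2 * L) → ℝ) × ℝ | 0 < p.2}
        (fun p => -(2 * (L:ℝ)) * Real.log p.2) := by
      have hconc : ConcaveOn ℝ (Set.Ioi 0) Real.log := strictConcaveOn_log_Ioi.concaveOn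
      have hconv : ConvexOn ℝ (Set.Ioi 0) (fun x => -Real.log x) := hconc.neg
      have := hconv.smul (c := 2 * (L:ℝ)) (by positivity)
      refine ⟨hset, fun x hx y hy a b ha hb hab => ?_⟩
      have := this.2 (Set.mem_Ioi.2 hx) (Set.mem_Ioi.2 hy) ha hb hab
      simpa [smul_eq_mul, mul_comm, mul_left_comm, neg_mul, mul_neg] using this
    have habs : ConvexOn ℝ {p : (Fin (2 * L) → ℝ) × ℝ | 0 < p.2}
        (fun p => (∑ j, |p.1 j|) / τ) := by
      have hsum : ConvexOn ℝ {p : (Fin (2 * L) → ℝ) × ℝ | 0 < p.2}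
          (fun p => ∑ j, |p.1 j|) := by
        refine ⟨hset, fun x hx y hy a b ha hb hab => ?_⟩
        simp only [smul_eq_mul, Finset.mul_sum]
        rw [← Finset.sum_add_distrib]
        refine Finset.sum_le_sum fun j _ => ?_
        simp only [Prod.fst_add, Prod.smul_fst, Pi.add_apply, Pi.smul_apply,
          smul_eq_mul]
        calc |a * x.1 j + b * y.1 j| ≤ |a * x.1 j| + |b * y.1 j| := abs_add_le _ _
          _ = a * |x.1 j| + b * |y.1 j| := by
              rw [abs_mul, abs_mul, abs_of_nonneg ha, abs_of_nonneg hb]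
      have := hsum.smul (c := 1 / τ) (by positivity)
      refine ⟨hset, fun x hx y hy a b ha hb hab => ?_⟩
      have h2 := this.2 hx hy ha hb hab
      simpa [smul_eq_mul, div_eq_mul_inv, mul_comm, mul_left_comm, mul_add] using h2
    have hcomb := (hlogc.add habs).add_const (2 * (L:ℝ) * Real.log (2 * τ))
    have heq : (fun p : (Fin (2 * L) → ℝ) × ℝ => 2 * (L:ℝ) * Real.log (2 * τ)
        - 2 * L * Real.log p.2 + (∑ j, |p.1 j|) / τ)
        = fun p => (-(2 * (L:ℝ)) * Real.log p.2 + (∑ j, |p.1 j|) / τ)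
          + 2 * (L:ℝ) * Real.log (2 * τ) := by
      funext p; ring
    rw [heq]
    exact hcomb
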